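/- Let ρ be a PSD matrix indexed by (Fin d_a) × (Fin d) with trace 1, and let u be a Hermitian matrix indexed by (Fin d_a) × (Fin d) such that Re(Tr(ρ·u)) + λmax(−A†(u)) < 0. Define W := −u − λmax(−A†(u))·I. Then W is Hermitian, Re(Tr(ρ·W)) > 0, the matrix A†(W) is negative semidefinite, and Re(Tr(A(X)·W)) ≤ 0 for every PSD matrix X indexed by (Fin d_a) × J_k; that is, W is an entanglement witness certifying that ρ does not lie in EXT_k. -/

import Mathlib

open Matrix
open scoped Kronecker ComplexOrder

noncomputable section

instance monoDecidable {k d : ℕ} : DecidablePred (Monotone : (Fin k → Fin d) → Prop) :=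
  fun f => decidable_of_iff (∀ a b : Fin k, a ≤ b → f a ≤ f b) Iff.rfl

/-- `Jk d k` : nondecreasing sequences of length `k` from `{0, …, d-1}`. -/
abbrev Jk (d k : ℕ) := {f : Fin k → Fin d // Monotone f}

/-- the nondecreasing rearrangement of a sequence. -/
def sortTuple {d k : ℕ} (i : Fin k → Fin d) : Jk d k :=
  ⟨i ∘ Tuple.sort i, Tuple.monotone_sort i⟩

/-- `permCount j` : the number of sequences whose sorted rearrangement is `j`. -/
def permCount {d k : ℕ} (j : Jk d k) : ℕ :=
  (Finset.univ.filter fun i : Fin k → Fin d => sortTuple i = j).card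

/-- The scaled partition matrix `P`. -/
def Pmat (d k : ℕ) : Matrix (Fin k → Fin d) (Jk d k) ℂ :=
  fun i j => if sortTuple i = j then (((permCount j : ℝ) ^ (-(1/2) : ℝ) : ℝ) : ℂ) else 0

/-- `cons0 b r` is the sequence `b⌢r` sending `0` to `b` and `s+1` to `r s`. -/
def cons0 {d k : ℕ} (b : Fin d) (r : Fin (k - 1) → Fin d) : Fin k → Fin d :=
  fun s => if h : (s : ℕ) = 0 then b else r ⟨(s : ℕ) - 1, by have := s.isLt; omega⟩

/-- Partial trace over the last `k - 1` factors. -/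
def PTr (da d k : ℕ)
    (M : Matrix (Fin da × (Fin k → Fin d)) (Fin da × (Fin k → Fin d)) ℂ) :
    Matrix (Fin da × Fin d) (Fin da × Fin d) ℂ :=
  fun p q => ∑ r : Fin (k - 1) → Fin d, M (p.1, cons0 p.2 r) (q.1, cons0 q.2 r)

/-- The operator `A`. -/
def Amap (da d k : ℕ) (X : Matrix (Fin da × Jk d k) (Fin da × Jk d k) ℂ) :
    Matrix (Fin da × Fin d) (Fin da × Fin d) ℂ :=
  PTr da d k (((1 : Matrix (Fin da) (Fin da) ℂ) ⊗ₖ Pmat d k) * X *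
    ((1 : Matrix (Fin da) (Fin da) ℂ) ⊗ₖ Pmat d k)ᴴ)

/-- The extension operator `E` : `E(W) ((a,i),(a',i')) = W ((a, i 0), (a', i' 0))` when
`i` and `i'` agree on all later coordinates, and `0` otherwise. -/
def Emat (da d k : ℕ) (hk : 0 < k)
    (W : Matrix (Fin da × Fin d) (Fin da × Fin d) ℂ) :
    Matrix (Fin da × (Fin k → Fin d)) (Fin da × (Fin k → Fin d)) ℂ :=
  fun p q =>
    if ∀ s : Fin (k - 1),
        p.2 ⟨(s : ℕ) + 1, by have := s.isLt; omega⟩ =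
          q.2 ⟨(s : ℕ) + 1, by have := s.isLt; omega⟩
    then W (p.1, p.2 ⟨0, hk⟩) (q.1, q.2 ⟨0, hk⟩) else 0

/-- The adjoint operator `A†`. -/
def Adag (da d k : ℕ) (hk : 0 < k)
    (W : Matrix (Fin da × Fin d) (Fin da × Fin d) ℂ) :
    Matrix (Fin da × Jk d k) (Fin da × Jk d k) ℂ :=
  ((1 : Matrix (Fin da) (Fin da) ℂ) ⊗ₖ Pmat d k)ᴴ * Emat da d k hk W *
    ((1 : Matrix (Fin da) (Fin da) ℂ) ⊗ₖ Pmat d k)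

/-- Partial transpose in the second index. -/
def pTransp {m α : Type*} (M : Matrix (m × α) (m × α) ℂ) : Matrix (m × α) (m × α) ℂ :=
  fun p q => M (p.1, q.2) (q.1, p.2)

/-- Squared Frobenius norm. -/
def frobSq {α β : Type*} [Fintype α] [Fintype β] (M : Matrix α β ℂ) : ℝ :=
  ∑ p, ∑ q, ‖M p q‖ ^ 2

/-- Largest eigenvalue of a Hermitian matrix. -/
def lamMax {n : Type*} [Fintype n] [DecidableEq n]
    {M : Matrix n n ℂ} (hM : M.IsHermitian) : ℝ :=
  ⨆ i, hM.eigenvalues i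

end
section Aux
variable {da d k : ℕ}

lemma cons0_zero (b : Fin d) (r : Fin (k-1) → Fin d) (h : (0:ℕ) < k) :
    cons0 b r ⟨0, h⟩ = b := rfl

lemma cons0_succ (b : Fin d) (r : Fin (k-1) → Fin d) (s : Fin (k-1)) (h : (s:ℕ)+1 < k) :
    cons0 b r ⟨(s:ℕ)+1, h⟩ = r s := by
  show (if h : ((⟨(s:ℕ)+1, h⟩ : Fin k) : ℕ) = 0 then b else _) = r s
  rw [dif_neg (by simp)]
  exact congrArg r (Fin.ext rfl)

noncomputable def splitEquiv (d k : ℕ) (hk : 0 < k) :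
    (Fin k → Fin d) ≃ (Fin d × (Fin (k-1) → Fin d)) where
  toFun i := (i ⟨0, hk⟩, fun s => i ⟨(s:ℕ)+1, by have := s.isLt; omega⟩)
  invFun p := cons0 p.1 p.2
  left_inv i := by
    funext s
    by_cases h : (s:ℕ) = 0
    · simp only [cons0, dif_pos h]; congr 1; exact Fin.ext h.symm
    · simp only [cons0, dif_neg h]; congr 1; exact Fin.ext (by simp; omega)
  right_inv p := by
    refine Prod.ext rfl (funext fun s => ?_)
    exact cons0_succ p.1 p.2 s (by have := s.isLt; omega)

lemma sortTuple_coe (j : Jk d k) : sortTuple j.1 = j := by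
  apply Subtype.ext
  show j.1 ∘ Tuple.sort j.1 = j.1
  rw [Tuple.sort_eq_refl_iff_monotone.mpr j.2]
  rfl

lemma permCount_pos (j : Jk d k) : 0 < permCount j := by
  rw [permCount, Finset.card_pos]
  exact ⟨j.1, by simp [sortTuple_coe]⟩

lemma Pmat_dag_mul (d k : ℕ) : (Pmat d k)ᴴ * Pmat d k = 1 := by
  ext j j'
  simp only [Matrix.mul_apply, Matrix.conjTranspose_apply, Pmat]
  by_cases h : j = j'
  · subst h
    have hpos : (0:ℝ) < (permCount j : ℝ) := by exact_mod_cast permCount_pos j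
    have key : ∀ i : Fin k → Fin d,
        star (if sortTuple i = j then (((permCount j : ℝ) ^ (-(1/2) : ℝ) : ℝ) : ℂ) else 0) *
          (if sortTuple i = j then (((permCount j : ℝ) ^ (-(1/2) : ℝ) : ℝ) : ℂ) else 0) =
        if sortTuple i = j then ((((permCount j : ℝ))⁻¹ : ℝ) : ℂ) else 0 := by
      intro i
      split_ifs with hi
      · rw [Complex.star_def, Complex.conj_ofReal, ← Complex.ofReal_mul,
          ← Real.rpow_add hpos, show (-(1/2) + -(1/2) : ℝ) = -1 by norm_num,
          Real.rpow_neg_one]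
      · simp
    rw [Finset.sum_congr rfl (fun i _ => key i), Finset.sum_ite, Finset.sum_const,
      Finset.sum_const_zero, add_zero, Matrix.one_apply_eq]
    show (permCount j : ℕ) • _ = (1:ℂ)
    rw [nsmul_eq_mul, ← Complex.ofReal_natCast, ← Complex.ofReal_mul,
      mul_inv_cancel₀ (ne_of_gt hpos)]
    norm_num
  · rw [Finset.sum_eq_zero, Matrix.one_apply_ne h]
    intro i _
    by_cases hi : sortTuple i = j
    · rw [if_neg (fun hc => h (hi.symm.trans hc)), mul_zero]
    · rw [if_neg hi, star_zero, zero_mul]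
end Aux
section Aux2
variable {da d k : ℕ}

lemma kron_conjT {l l' m m' : Type*} (A : Matrix l l' ℂ) (B : Matrix m m' ℂ) :
    (A ⊗ₖ B)ᴴ = Aᴴ ⊗ₖ Bᴴ := by
  ext ⟨i, j⟩ ⟨i', j'⟩
  simp [Matrix.conjTranspose_apply, Matrix.kroneckerMap_apply, StarMul.star_mul, mul_comm]

lemma Qdag_Q (da d k : ℕ) :
    ((1 : Matrix (Fin da) (Fin da) ℂ) ⊗ₖ Pmat d k)ᴴ *
      ((1 : Matrix (Fin da) (Fin da) ℂ) ⊗ₖ Pmat d k) = 1 := by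
  rw [kron_conjT, Matrix.conjTranspose_one, ← Matrix.mul_kronecker_mul, one_mul,
    Pmat_dag_mul, Matrix.one_kronecker_one]

lemma Emat_one (hk : 0 < k) : Emat da d k hk 1 = 1 := by
  ext ⟨a, i⟩ ⟨a', i'⟩
  simp only [Emat, Matrix.one_apply, Prod.mk.injEq, Prod.ext_iff]
  by_cases h : ∀ s : Fin (k - 1),
      i ⟨(s : ℕ) + 1, by have := s.isLt; omega⟩ = i' ⟨(s : ℕ) + 1, by have := s.isLt; omega⟩
  · rw [if_pos h]
    by_cases h2 : a = a' ∧ i = i'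
    · rw [if_pos ⟨h2.1, h2.2 ▸ rfl⟩, if_pos h2]
    · rw [if_neg, if_neg h2]
      intro ⟨ha, hi⟩
      exact h2 ⟨ha, (splitEquiv d k hk).injective (Prod.ext hi (funext fun s => h s))⟩
  · rw [if_neg h, eq_comm]
    rw [if_neg]
    intro ⟨ha, hi⟩
    exact h fun s => by rw [hi]
end Aux2
section Aux3
variable {da d k : ℕ}

lemma Emat_add (hk : 0 < k) (A B : Matrix (Fin da × Fin d) (Fin da × Fin d) ℂ) :
    Emat da d k hk (A + B) = Emat da d k hk A + Emat da d k hk B := by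
  ext p q
  simp only [Emat, Matrix.add_apply]
  split_ifs <;> simp

lemma Emat_neg (hk : 0 < k) (A : Matrix (Fin da × Fin d) (Fin da × Fin d) ℂ) :
    Emat da d k hk (-A) = -Emat da d k hk A := by
  ext p q
  simp only [Emat, Matrix.neg_apply]
  split_ifs <;> simp

lemma Emat_smul (hk : 0 < k) (c : ℂ) (A : Matrix (Fin da × Fin d) (Fin da × Fin d) ℂ) :
    Emat da d k hk (c • A) = c • Emat da d k hk A := by
  ext p q
  simp only [Emat, Matrix.smul_apply]
  split_ifs <;> simp

lemma Adag_eq (hk : 0 < k) (u : Matrix (Fin da × Fin d) (Fin da × Fin d) ℂ) (c : ℂ) :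
    Adag da d k hk (-u - c • 1) = -Adag da d k hk u - c • 1 := by
  simp only [Adag, sub_eq_add_neg, ← neg_smul, Emat_add, Emat_neg, Emat_smul, Emat_one,
    Matrix.mul_add, Matrix.add_mul, Matrix.mul_neg, Matrix.neg_mul,
    Matrix.mul_smul, Matrix.smul_mul, Matrix.mul_one, Qdag_Q]

/-- trace of PSD matrix is nonneg (complex order). -/
lemma trace_re_nonneg_of_psd {n : Type*} [Fintype n] [DecidableEq n]
    {M : Matrix n n ℂ} (hM : M.PosSemidef) : 0 ≤ M.trace.re := by
  rw [Matrix.trace, Complex.re_sum]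
  refine Finset.sum_nonneg fun i _ => ?_
  have := hM.dotProduct_mulVec_nonneg (Pi.single i 1)
  have hdiag : (star (Pi.single i 1) ⬝ᵥ M *ᵥ Pi.single i 1) = M i i := by
    simp [Matrix.mulVec_single, dotProduct, Pi.single_apply, apply_ite (star : ℂ → ℂ)]
  rw [hdiag] at this
  exact (Complex.le_def.mp this).1

lemma trace_mul_re_nonneg {n : Type*} [Fintype n] [DecidableEq n]
    {A B : Matrix n n ℂ} (hA : A.PosSemidef) (hB : B.PosSemidef) :
    0 ≤ ((A * B).trace).re := by
  obtain ⟨C, rfl⟩ : ∃ C : Matrix n n ℂ, A = Cᴴ * C := by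
    open scoped MatrixOrder Matrix.Norms.L2Operator in
    exact CStarAlgebra.nonneg_iff_eq_star_mul_self.mp hA.nonneg
  rw [← Matrix.trace_mul_cycle]
  exact trace_re_nonneg_of_psd (hB.mul_mul_conjTranspose_same C)

/-- `lamMax hM • 1 - M` is PSD. -/
lemma lamMax_smul_sub_psd {n : Type*} [Fintype n] [DecidableEq n] [Nonempty n]
    {M : Matrix n n ℂ} (hM : M.IsHermitian) :
    (((lamMax hM : ℝ) : ℂ) • (1 : Matrix n n ℂ) - M).PosSemidef := by
  have hle : ∀ i, hM.eigenvalues i ≤ lamMax hM := fun i =>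
    le_ciSup (Set.Finite.bddAbove (Set.finite_range _)) i
  set U := hM.eigenvectorUnitary
  have hsp := hM.spectral_theorem
  have hU : (U : Matrix n n ℂ) * (star (U : Matrix n n ℂ)) = 1 :=
    Matrix.mem_unitaryGroup_iff.mp U.2
  have key : ((lamMax hM : ℂ)) • (1 : Matrix n n ℂ) - M
      = (U : Matrix n n ℂ) *
          Matrix.diagonal (fun i => ((lamMax hM - hM.eigenvalues i : ℝ) : ℂ)) *
          (star (U : Matrix n n ℂ)) := by
    have : Matrix.diagonal (fun i => ((lamMax hM - hM.eigenvalues i : ℝ) : ℂ))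
        = (lamMax hM : ℂ) • (1 : Matrix n n ℂ)
          - Matrix.diagonal (RCLike.ofReal ∘ hM.eigenvalues) := by
      ext a b
      by_cases hab : a = b
      · subst hab
        simp only [Matrix.diagonal_apply_eq, Matrix.sub_apply, Matrix.smul_apply,
          Matrix.one_apply_eq, Function.comp_apply, smul_eq_mul, mul_one]
        push_cast
        rfl
      · simp [Matrix.diagonal_apply_ne _ hab, Matrix.one_apply_ne hab]
    rw [this, Matrix.mul_sub, Matrix.sub_mul, Matrix.mul_smul, Matrix.mul_one,
      Matrix.smul_mul, hU]
    congr 1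
  rw [key, Matrix.star_eq_conjTranspose]
  refine Matrix.PosSemidef.mul_mul_conjTranspose_same ?_ _
  refine Matrix.posSemidef_diagonal_iff.mpr fun i => ?_
  rw [Complex.zero_le_real]
  exact sub_nonneg.mpr (hle i)
end Aux3
section Aux4
variable {da d k : ℕ}

lemma Emat_cons0 (hk : 0 < k) (W : Matrix (Fin da × Fin d) (Fin da × Fin d) ℂ)
    (a a' : Fin da) (b b' : Fin d) (r r' : Fin (k-1) → Fin d) :
    Emat da d k hk W (a', cons0 b' r') (a, cons0 b r)
      = if r' = r then W (a', b') (a, b) else 0 := by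
  simp only [Emat]
  by_cases hrr : r' = r
  · subst hrr
    rw [if_pos fun s => (cons0_succ b' r' s (by have := s.isLt; omega)).trans
        (cons0_succ b r' s (by have := s.isLt; omega)).symm, if_pos rfl]
    rfl
  · rw [if_neg, if_neg hrr]
    intro hall
    exact hrr (funext fun s =>
      ((cons0_succ b' r' s (by have := s.isLt; omega)).symm.trans (hall s)).trans
        (cons0_succ b r s (by have := s.isLt; omega)))

lemma trace_PTr_mul (da d k : ℕ) (hk : 0 < k)
    (M : Matrix (Fin da × (Fin k → Fin d)) (Fin da × (Fin k → Fin d)) ℂ)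
    (W : Matrix (Fin da × Fin d) (Fin da × Fin d) ℂ) :
    ((PTr da d k M) * W).trace = (M * Emat da d k hk W).trace := by
  classical
  symm
  calc (M * Emat da d k hk W).trace
      = ∑ a : Fin da, ∑ i : Fin k → Fin d, ∑ a' : Fin da, ∑ i' : Fin k → Fin d,
          M (a, i) (a', i') * Emat da d k hk W (a', i') (a, i) := by
        simp only [Matrix.trace, Matrix.diag_apply, Matrix.mul_apply, Fintype.sum_prod_type]
    _ = ∑ a : Fin da, ∑ br : Fin d × (Fin (k-1) → Fin d), ∑ a' : Fin da,
          ∑ br' : Fin d × (Fin (k-1) → Fin d),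
          M (a, cons0 br.1 br.2) (a', cons0 br'.1 br'.2) *
            Emat da d k hk W (a', cons0 br'.1 br'.2) (a, cons0 br.1 br.2) := by
        refine Finset.sum_congr rfl fun a _ => ?_
        rw [← Equiv.sum_comp (splitEquiv d k hk).symm]
        refine Finset.sum_congr rfl fun br _ => Finset.sum_congr rfl fun a' _ => ?_
        rw [← Equiv.sum_comp (splitEquiv d k hk).symm]
        rfl
    _ = ∑ a : Fin da, ∑ br : Fin d × (Fin (k-1) → Fin d), ∑ a' : Fin da, ∑ b' : Fin d,
          ∑ r' : Fin (k-1) → Fin d,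
          (if r' = br.2 then
            M (a, cons0 br.1 br.2) (a', cons0 b' r') * W (a', b') (a, br.1) else 0) := by
        refine Finset.sum_congr rfl fun a _ => Finset.sum_congr rfl fun br _ =>
          Finset.sum_congr rfl fun a' _ => ?_
        rw [Fintype.sum_prod_type]
        refine Finset.sum_congr rfl fun b' _ => Finset.sum_congr rfl fun r' _ => ?_
        rw [Emat_cons0, mul_ite, mul_zero]
    _ = ∑ a : Fin da, ∑ br : Fin d × (Fin (k-1) → Fin d), ∑ a' : Fin da, ∑ b' : Fin d,
          M (a, cons0 br.1 br.2) (a', cons0 b' br.2) * W (a', b') (a, br.1) := by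
        simp only [Finset.sum_ite_eq', Finset.mem_univ, if_true]
    _ = (PTr da d k M * W).trace := by
        simp only [Matrix.trace, Matrix.diag_apply, Matrix.mul_apply, PTr,
          Fintype.sum_prod_type, Finset.sum_mul]
        refine Finset.sum_congr rfl fun a _ => Finset.sum_congr rfl fun b _ => ?_
        rw [Finset.sum_comm]
        refine Finset.sum_congr rfl fun a' _ => ?_
        rw [Finset.sum_comm]
end Aux4


theorem stmt14 (da d k : ℕ) (hda : 0 < da) (hd : 0 < d) (hk : 0 < k)
    (ρ : Matrix (Fin da × Fin d) (Fin da × Fin d) ℂ)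
    (hρ : ρ.PosSemidef) (hρtr : ρ.trace = 1)
    (u : Matrix (Fin da × Fin d) (Fin da × Fin d) ℂ) (hu : u.IsHermitian)
    (hnegH : (-(Adag da d k hk u)).IsHermitian)
    (hlt : ((ρ * u).trace).re + lamMax hnegH < 0)
    (W : Matrix (Fin da × Fin d) (Fin da × Fin d) ℂ)
    (hW : W = -u - ((lamMax hnegH : ℝ) : ℂ) • (1 : Matrix (Fin da × Fin d) (Fin da × Fin d) ℂ)) :
    W.IsHermitian ∧
    0 < ((ρ * W).trace).re ∧
    (-(Adag da d k hk W)).PosSemidef ∧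
    ∀ X : Matrix (Fin da × Jk d k) (Fin da × Jk d k) ℂ, X.PosSemidef →
      ((Amap da d k X * W).trace).re ≤ 0 := by
  haveI : Nonempty (Fin da) := Fin.pos_iff_nonempty.mp hda
  haveI : Nonempty (Jk d k) := ⟨⟨fun _ => ⟨0, hd⟩, monotone_const⟩⟩
  set c : ℝ := lamMax hnegH with hc
  have hsmul : (((c : ℝ) : ℂ) • (1 : Matrix (Fin da × Fin d) (Fin da × Fin d) ℂ)).IsHermitian := by
    unfold Matrix.IsHermitian
    rw [Matrix.conjTranspose_smul, Matrix.conjTranspose_one]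
    congr 1
    exact Complex.conj_ofReal _
  have hermW : W.IsHermitian := by
    rw [hW]; exact hu.neg.sub hsmul
  have hAdagW : Adag da d k hk W = -(Adag da d k hk u) - ((c : ℝ) : ℂ) • 1 := by
    rw [hW]; exact Adag_eq hk u _
  have hpsd : (-(Adag da d k hk W)).PosSemidef := by
    have hrw : -(Adag da d k hk W)
        = ((c : ℝ) : ℂ) • (1 : Matrix (Fin da × Jk d k) (Fin da × Jk d k) ℂ)
          - (-(Adag da d k hk u)) := by
      rw [hAdagW]; module
    rw [hrw]
    exact lamMax_smul_sub_psd hnegH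
  refine ⟨hermW, ?_, hpsd, ?_⟩
  · have htr : (ρ * W).trace = -((ρ * u).trace) - ((c : ℝ) : ℂ) := by
      rw [hW, Matrix.mul_sub, Matrix.mul_neg, Matrix.mul_smul, Matrix.mul_one,
        Matrix.trace_sub, Matrix.trace_neg, Matrix.trace_smul, hρtr, smul_eq_mul, mul_one]
    rw [htr]
    simp only [Complex.sub_re, Complex.neg_re, Complex.ofReal_re]
    linarith
  · intro X hX
    set Q := ((1 : Matrix (Fin da) (Fin da) ℂ) ⊗ₖ Pmat d k) with hQ
    have h1 : (Amap da d k X * W).trace = (X * Adag da d k hk W).trace := by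
      rw [Amap, trace_PTr_mul da d k hk]
      have h2 : (Q * X * Qᴴ) * Emat da d k hk W = Q * (X * (Qᴴ * Emat da d k hk W)) := by
        simp only [Matrix.mul_assoc]
      rw [h2, Matrix.trace_mul_comm, Adag, Matrix.mul_assoc, Matrix.mul_assoc]
    rw [h1]
    have h3 : (X * Adag da d k hk W).trace = -((X * (-(Adag da d k hk W))).trace) := by
      rw [Matrix.mul_neg, Matrix.trace_neg, neg_neg]
    rw [h3, Complex.neg_re, neg_nonpos]
    exact trace_mul_re_nonneg hX hpsd
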